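/- arXiv:1502.04338 — 3 statements merged into one kernel-verified Lean document; each statement's English description precedes it below -/
import Mathlib

section
/- If α : A → B and β : B → C are surjective group homomorphisms with perfect kernels, then β ∘ α : A → C is surjective with perfect kernel. -/
theorem stmt_4 (A B C : Type*) [Group A] [Group B] [Group C]
    (α : A →* B) (β : B →* C)
    (hα : Function.Surjective α) (hβ : Function.Surjective β)
    (hkα : ⁅α.ker, α.ker⁆ = α.ker) (hkβ : ⁅β.ker, β.ker⁆ = β.ker) :
    Function.Surjective (β.comp α) ∧
      ⁅(β.comp α).ker, (β.comp α).ker⁆ = (β.comp α).ker := by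
  refine ⟨hβ.comp hα, ?_⟩
  set K := (β.comp α).ker with hK
  have hkerA : α.ker ≤ K := by
    intro x hx
    have h1 : α x = 1 := hx
    show β (α x) = 1
    simp [h1]
  have hmap : Subgroup.map α K = β.ker := by
    have : K = Subgroup.comap α β.ker := by
      ext x; simp [hK, MonoidHom.mem_ker]
    rw [this, Subgroup.map_comap_eq_self_of_surjective hα]
  refine le_antisymm (Subgroup.commutator_le_right K K) ?_
  intro x hx
  have hαx : α x ∈ Subgroup.map α ⁅K, K⁆ := by
    rw [Subgroup.map_commutator, hmap, hkβ, ← hmap]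
    exact ⟨x, hx, rfl⟩
  obtain ⟨c, hc, hcx⟩ := hαx
  have hinv : c⁻¹ * x ∈ α.ker := by
    simp [MonoidHom.mem_ker, hcx]
  have : c⁻¹ * x ∈ ⁅K, K⁆ := by
    rw [← hkα] at hinv
    exact Subgroup.commutator_mono hkerA hkerA hinv
  have := mul_mem hc this
  simpa using this
end

section
/- Let A, B, C, D be non-trivial groups and φ : A × B → C * D a surjective group homomorphism. Then one of φ(A × {1}) and φ({1} × B) is trivial and the other is all of C * D. -/
open Monoid

section FreeProductAux

open Monoid.CoprodI

namespace FPAux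
variable {α : Type*}

/-- `lpow l n` is `l ++ l ++ ... ++ l`, `n` times. -/
def lpow (l : List α) : ℕ → List α
  | 0 => []
  | n+1 => l ++ lpow l n

lemma lpow_add (l : List α) (m n : ℕ) : lpow l (m + n) = lpow l m ++ lpow l n := by
  induction m with
  | zero => simp [lpow]
  | succ m ih => rw [Nat.succ_add]; simp [lpow, ih]

lemma comm_lpow {l r : List α} (h : l ++ r = r ++ l) (n : ℕ) :
    r ++ lpow l n = lpow l n ++ r := by
  induction n with
  | zero => simp [lpow]
  | succ n ih => simp only [lpow, ← List.append_assoc, ← h]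
                 rw [List.append_assoc, ih, List.append_assoc]

lemma lpow_append_comm {l r : List α} (h : l ++ r = r ++ l) (n : ℕ) :
    lpow (l ++ r) n = lpow l n ++ lpow r n := by
  induction n with
  | zero => simp [lpow]
  | succ n ih =>
      simp only [lpow, ih, ← List.append_assoc]
      rw [List.append_assoc l r, comm_lpow h, ← List.append_assoc]

lemma comm_lists : ∀ (N : ℕ) (l₁ l₂ : List α), l₁.length + l₂.length ≤ N →
    l₁ ++ l₂ = l₂ ++ l₁ → lpow l₁ l₂.length = lpow l₂ l₁.length := by
  intro N
  induction N with
  | zero =>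
    intro l₁ l₂ hle _
    have h1 : l₁ = [] := List.length_eq_zero_iff.mp (by omega)
    have h2 : l₂ = [] := List.length_eq_zero_iff.mp (by omega)
    subst h1; subst h2; rfl
  | succ N ih =>
    intro l₁ l₂ hle h
    rcases eq_or_ne l₁ [] with rfl | h1
    · simp [lpow]
      induction l₂.length with
      | zero => rfl
      | succ n ihn => simpa [lpow] using ihn
    rcases eq_or_ne l₂ [] with rfl | h2
    · simp [lpow]
      induction l₁.length with
      | zero => rfl
      | succ n ihn => simpa [lpow] using ihn
    rcases le_total l₁.length l₂.length with hlen | hlen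
    · -- l₁ is a prefix of l₂
      have htake : l₂.take l₁.length = l₁ := by
        have := congrArg (List.take l₁.length) h
        rwa [List.take_left, List.take_append_of_le_length hlen, eq_comm] at this
      set r := l₂.drop l₁.length with hr
      have hl₂ : l₂ = l₁ ++ r := by rw [← htake, hr, List.take_append_drop]
      have hcomm : l₁ ++ r = r ++ l₁ := by
        have h' := h
        rw [hl₂] at h'
        simp only [List.append_assoc] at h'
        exact List.append_cancel_left (as := l₁) (by simpa [List.append_assoc] using h')
      have hrlen : r.length = l₂.length - l₁.length := by simp [hr]
      have hlpos : 0 < l₁.length := List.length_pos_iff.2 h1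
      have ihr : lpow l₁ r.length = lpow r l₁.length := by
        apply ih l₁ r _ hcomm
        omega
      rw [hl₂, lpow_append_comm hcomm, List.length_append, lpow_add, ihr]
    · -- symmetric
      have htake : l₁.take l₂.length = l₂ := by
        have := congrArg (List.take l₂.length) h
        rwa [List.take_left, List.take_append_of_le_length hlen] at this
      set r := l₁.drop l₂.length with hr
      have hl₁ : l₁ = l₂ ++ r := by rw [← htake, hr, List.take_append_drop]
      have hcomm : l₂ ++ r = r ++ l₂ := by
        have h' := h.symm
        rw [hl₁] at h'
        simp only [List.append_assoc] at h'
        exact List.append_cancel_left (as := l₂) (by simpa [List.append_assoc] using h')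
      have hrlen : r.length = l₁.length - l₂.length := by simp [hr]
      have hlpos : 0 < l₂.length := List.length_pos_iff.2 h2
      have ihr : lpow l₂ r.length = lpow r l₂.length := by
        apply ih l₂ r _ hcomm
        omega
      rw [hl₁, lpow_append_comm hcomm, List.length_append, lpow_add, ihr]


open Monoid Monoid.CoprodI

variable {M : Bool → Type*} [∀ b, Group (M b)]

def prodL (l : List (Σ b, M b)) : CoprodI M := (l.map fun p => CoprodI.of p.2).prod

@[simp] lemma prodL_nil : prodL ([] : List (Σ b, M b)) = 1 := rfl

@[simp] lemma prodL_cons (p : Σ b, M b) (l : List (Σ b, M b)) :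
    prodL (p :: l) = CoprodI.of p.2 * prodL l := by simp [prodL]

@[simp] lemma prodL_append (l₁ l₂ : List (Σ b, M b)) :
    prodL (l₁ ++ l₂) = prodL l₁ * prodL l₂ := by simp [prodL]

def Valid (l : List (Σ b, M b)) : Prop :=
  (∀ p ∈ l, p.2 ≠ (1 : M p.1)) ∧ l.Chain' (fun p q => p.1 ≠ q.1)

lemma prodL_inj {l₁ l₂ : List (Σ b, M b)} (h₁ : Valid l₁) (h₂ : Valid l₂)
    (h : prodL l₁ = prodL l₂) : l₁ = l₂ := by
  classical
  let w₁ : Word M := ⟨l₁, h₁.1, h₁.2⟩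
  let w₂ : Word M := ⟨l₂, h₂.1, h₂.2⟩
  have hp : w₁.prod = w₂.prod := h
  have : w₁ = w₂ := Word.equiv.symm.injective hp
  exact congrArg Word.toList this

/-- every element is the product of a valid list -/
lemma exists_valid (x : CoprodI M) : ∃ l : List (Σ b, M b), Valid l ∧ prodL l = x := by
  classical
  exact ⟨(Word.equiv x).toList, ⟨(Word.equiv x).ne_one, (Word.equiv x).chain_ne⟩,
    Word.equiv.symm_apply_apply x⟩

lemma prodL_ne_one {l : List (Σ b, M b)} (hv : Valid l) (hne : l ≠ []) :
    prodL l ≠ 1 := by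
  intro h
  have : l = [] := prodL_inj hv ⟨by simp, by simp [List.Chain']⟩ (by simpa using h)
  exact hne this

end FPAux

namespace FP2
open FPAux Monoid Monoid.CoprodI

variable {M : Bool → Type*} [∀ b, Group (M b)]

/-- A valid list starting with an `i`-letter and ending with a `j`-letter. -/
def Shape (i j : Bool) (l : List (Σ b, M b)) : Prop :=
  Valid l ∧ l.head?.map Sigma.fst = some i ∧ l.getLast?.map Sigma.fst = some j

lemma Shape.ne_nil {i j : Bool} {l : List (Σ b, M b)} (h : Shape i j l) : l ≠ [] := by
  rintro rfl; simpa using h.2.1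

lemma Shape.singleton {i : Bool} {a : M i} (ha : a ≠ 1) :
    Shape i i [(⟨i, a⟩ : Σ b, M b)] := by
  refine ⟨⟨?_, ?_⟩, ?_, ?_⟩ <;> simp [ha, List.Chain']

lemma Shape.append {i j k m : Bool} {l₁ l₂ : List (Σ b, M b)}
    (h₁ : Shape i j l₁) (h₂ : Shape k m l₂) (hjk : j ≠ k) : Shape i m (l₁ ++ l₂) := by
  obtain ⟨⟨hn₁, hc₁⟩, hh₁, hg₁⟩ := h₁
  obtain ⟨⟨hn₂, hc₂⟩, hh₂, hg₂⟩ := h₂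
  obtain ⟨a₁, ha₁, hfa₁⟩ := Option.map_eq_some_iff.mp hh₁
  obtain ⟨a₂, ha₂, hfa₂⟩ := Option.map_eq_some_iff.mp hg₂
  refine ⟨⟨?_, ?_⟩, ?_, ?_⟩
  · intro p hp; rcases List.mem_append.1 hp with h | h
    exacts [hn₁ p h, hn₂ p h]
  · refine List.IsChain.append hc₁ hc₂ ?_
    intro x hx y hy
    rw [Option.mem_def] at hx hy
    rw [hx, Option.map_some, Option.some_inj] at hg₁
    rw [hy, Option.map_some, Option.some_inj] at hh₂
    rw [hg₁, hh₂]; exact hjk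
  · rw [List.head?_append, ha₁]; simpa using hfa₁
  · rw [List.getLast?_append, ha₂]; simpa using hfa₂

/-- reverse with inverted letters -/
def revInv (l : List (Σ b, M b)) : List (Σ b, M b) :=
  (l.map fun p => ⟨p.1, p.2⁻¹⟩).reverse

lemma prodL_revInv (l : List (Σ b, M b)) : prodL (revInv l) = (prodL l)⁻¹ := by
  induction l with
  | nil => simp [revInv]
  | cons p l ih =>
    have : revInv (p :: l) = revInv l ++ [⟨p.1, p.2⁻¹⟩] := by simp [revInv]
    rw [this, prodL_append, ih, prodL_cons]
    simp [mul_comm, map_inv]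

lemma Shape.revInv {i j : Bool} {l : List (Σ b, M b)} (h : Shape i j l) :
    Shape j i (revInv l) := by
  obtain ⟨⟨hn, hc⟩, hh, hg⟩ := h
  refine ⟨⟨?_, ?_⟩, ?_, ?_⟩
  · intro p hp
    rw [FP2.revInv, List.mem_reverse, List.mem_map] at hp
    obtain ⟨q, hq, rfl⟩ := hp
    simpa using inv_ne_one.2 (hn q hq)
  · rw [FP2.revInv, List.Chain', List.isChain_reverse]
    refine (List.isChain_map _).2 ?_
    exact List.IsChain.imp (fun a b hab => fun hne => hab hne.symm) hc
  · rw [FP2.revInv, List.head?_reverse, List.getLast?_map]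
    rcases l.eq_nil_or_concat with rfl | ⟨L, b, rfl⟩
    · simp at hg
    · simpa using by simpa using hg
  · rw [FP2.revInv, List.getLast?_reverse, List.head?_map]
    cases l with
    | nil => simp at hh
    | cons a t => simpa using by simpa using hh
lemma exists_good [Nontrivial (M true)] [Nontrivial (M false)]
    (S : Subgroup (CoprodI M)) (hconj : ∀ g x, x ∈ S → g * x * g⁻¹ ∈ S)
    (x : CoprodI M) (hx : x ∈ S) (hx1 : x ≠ 1) :
    ∃ u ∈ S, ∃ l : List (Σ b, M b), Shape true false l ∧ prodL l = u := by
  obtain ⟨l, hv, hp⟩ := exists_valid x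
  have hne : l ≠ [] := by rintro rfl; exact hx1 (by simpa using hp.symm)
  have hh : l.head?.map Sigma.fst = some (l.head hne).fst := by
    rw [List.head?_eq_head hne]; rfl
  have hg : l.getLast?.map Sigma.fst = some (l.getLast hne).fst := by
    rw [List.getLast?_eq_getLast_of_ne_nil hne]; rfl
  obtain ⟨γ, hγ⟩ := exists_ne (1 : M true)
  obtain ⟨δ, hδ⟩ := exists_ne (1 : M false)
  rcases h1 : (l.head hne).fst with _ | _ <;> rcases h2 : (l.getLast hne).fst with _ | _
  · -- (false, false) : u = (γ x γ⁻¹) * x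
    have hs : Shape false false l := ⟨hv, by rw [hh, h1], by rw [hg, h2]⟩
    refine ⟨CoprodI.of γ * x * (CoprodI.of γ)⁻¹ * x, mul_mem (hconj _ x hx) hx,
      ([(⟨true, γ⟩ : Σ b, M b)] ++ l ++ [(⟨true, γ⁻¹⟩ : Σ b, M b)]) ++ l, ?_, ?_⟩
    · exact (((Shape.singleton hγ).append hs (by simp)).append
        (Shape.singleton (inv_ne_one.2 hγ)) (by simp)).append hs (by simp)
    · simp [hp, map_inv, mul_assoc]
  · -- (false, true) : u = x⁻¹
    have hs : Shape false true l := ⟨hv, by rw [hh, h1], by rw [hg, h2]⟩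
    exact ⟨x⁻¹, inv_mem hx, revInv l, hs.revInv, by rw [prodL_revInv, hp]⟩
  · -- (true, false) : u = x
    exact ⟨x, hx, l, ⟨hv, by rw [hh, h1], by rw [hg, h2]⟩, hp⟩
  · -- (true, true) : u = x * (δ x δ⁻¹)
    have hs : Shape true true l := ⟨hv, by rw [hh, h1], by rw [hg, h2]⟩
    refine ⟨x * (CoprodI.of δ * x * (CoprodI.of δ)⁻¹), mul_mem hx (hconj _ x hx),
      (l ++ [(⟨false, δ⟩ : Σ b, M b)] ++ l) ++ [(⟨false, δ⁻¹⟩ : Σ b, M b)], ?_, ?_⟩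
    · exact ((hs.append (Shape.singleton hδ) (by simp)).append hs (by simp)).append
        (Shape.singleton (inv_ne_one.2 hδ)) (by simp)
    · simp [hp, map_inv, mul_assoc]

lemma prodL_lpow (l : List (Σ b, M b)) (n : ℕ) :
    prodL (FPAux.lpow l n) = (prodL l) ^ n := by
  induction n with
  | zero => simp [FPAux.lpow]
  | succ n ih => rw [pow_succ']; show prodL (l ++ FPAux.lpow l n) = _; simp [ih]

theorem core [Nontrivial (M true)] [Nontrivial (M false)] (H K : Subgroup (CoprodI M))
    (comm : ∀ x ∈ H, ∀ y ∈ K, x * y = y * x)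
    (cover : ∀ g : CoprodI M, ∃ x ∈ H, ∃ y ∈ K, g = x * y) :
    H = ⊥ ∨ K = ⊥ := by
  by_contra hcon
  push_neg at hcon
  obtain ⟨hH, hK⟩ := hcon
  obtain ⟨x, hxH, hx1⟩ : ∃ x ∈ H, x ≠ 1 := by
    by_contra h; push_neg at h; exact hH ((Subgroup.eq_bot_iff_forall H).2 h)
  obtain ⟨y, hyK, hy1⟩ : ∃ y ∈ K, y ≠ 1 := by
    by_contra h; push_neg at h; exact hK ((Subgroup.eq_bot_iff_forall K).2 h)
  have hHconj : ∀ g z, z ∈ H → g * z * g⁻¹ ∈ H := by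
    intro g z hz
    obtain ⟨a, ha, b, hb, rfl⟩ := cover g
    have hbz : b * z = z * b := (comm z hz b hb).symm
    have : a * b * z * (a * b)⁻¹ = a * z * a⁻¹ := by
      rw [mul_inv_rev, mul_assoc a b z, hbz, ← mul_assoc]
      group
    rw [this]
    exact H.mul_mem (H.mul_mem ha hz) (H.inv_mem ha)
  have hKconj : ∀ g z, z ∈ K → g * z * g⁻¹ ∈ K := by
    intro g z hz
    obtain ⟨a, ha, b, hb, rfl⟩ := cover g
    have h0 : a * b * z * (a * b)⁻¹ = a * (b * z * b⁻¹) * a⁻¹ := by group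
    rw [h0]
    have hb' : b * z * b⁻¹ ∈ K := K.mul_mem (K.mul_mem hb hz) (K.inv_mem hb)
    have h1 : a * (b * z * b⁻¹) = b * z * b⁻¹ * a := comm a ha _ hb'
    rw [h1]
    have : b * z * b⁻¹ * a * a⁻¹ = b * z * b⁻¹ := by group
    rw [this]; exact hb'
  obtain ⟨u, huH, l₁, hs₁, hpu⟩ := exists_good H hHconj x hxH hx1
  obtain ⟨v, hvK, l₂, hs₂, hpv⟩ := exists_good K hKconj y hyK hy1
  have huv : u * v = v * u := comm u huH v hvK
  have heq : l₁ ++ l₂ = l₂ ++ l₁ := by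
    apply prodL_inj ((hs₁.append hs₂ (by simp)).1) ((hs₂.append hs₁ (by simp)).1)
    rw [prodL_append, prodL_append, hpu, hpv, huv]
  have hpow := comm_lists (l₁.length + l₂.length) l₁ l₂ le_rfl heq
  set t : CoprodI M := u ^ l₂.length with htdef
  have htv : t = v ^ l₁.length := by
    rw [htdef, ← hpu, ← hpv, ← prodL_lpow, ← prodL_lpow, hpow]
  have htH : t ∈ H := H.pow_mem huH _
  have htK : t ∈ K := htv ▸ K.pow_mem hvK _
  have hl₂pos : 0 < l₂.length := List.length_pos_iff.2 hs₂.ne_nil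
  have hLgood' : ∀ n, 0 < n → Shape true false (lpow l₁ n) := by
    intro n
    induction n with
    | zero => omega
    | succ n ih =>
      intro _
      rcases Nat.eq_zero_or_pos n with rfl | hn'
      · show Shape true false (l₁ ++ lpow l₁ 0)
        simpa [lpow] using hs₁
      · show Shape true false (l₁ ++ lpow l₁ n)
        exact hs₁.append (ih hn') (by simp)
  have hLgood : Shape true false (lpow l₁ l₂.length) := hLgood' _ hl₂pos
  have hLt : prodL (lpow l₁ l₂.length) = t := by rw [prodL_lpow, hpu]
  have tcomm : ∀ g : CoprodI M, g * t * g⁻¹ = t := by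
    intro g
    obtain ⟨a, ha, b, hb, rfl⟩ := cover g
    have h1 : a * t = t * a := comm a ha t htK
    have h2 : t * b = b * t := comm t htH b hb
    calc a * b * t * (a * b)⁻¹ = a * (b * t * b⁻¹) * a⁻¹ := by group
    _ = a * t * a⁻¹ := by rw [← h2]; group
    _ = t := by rw [h1]; group
  set L := lpow l₁ l₂.length with hLdef
  rcases L.eq_nil_or_concat with hnil | ⟨l', e, hLe⟩
  · exact hLgood.ne_nil hnil
  rw [List.concat_eq_append] at hLe
  have hefst : e.fst = false := by
    have h := hLgood.2.2
    rw [hLe, List.getLast?_concat] at h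
    simpa using h
  obtain ⟨eb, ed⟩ := e
  dsimp at hefst
  subst hefst
  have hl'ne : l' ≠ [] := by
    rintro rfl
    have h := hLgood.2.1
    rw [hLe] at h
    simp at h
  have hed1 : ed ≠ 1 := by
    exact hLgood.1.1 ⟨false, ed⟩ (by rw [hLe]; exact List.mem_append_right _ (by simp))
  have hrot : prodL (l' ++ [(⟨false, ed⟩ : Σ b, M b)]) = prodL ((⟨false, ed⟩ : Σ b, M b) :: l') := by
    have h1 : prodL (l' ++ [(⟨false, ed⟩ : Σ b, M b)]) = t := by rw [← hLe]; exact hLt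
    have h2 := tcomm (CoprodI.of ed)
    calc prodL (l' ++ [(⟨false, ed⟩ : Σ b, M b)]) = t := h1
    _ = CoprodI.of ed * t * (CoprodI.of ed)⁻¹ := h2.symm
    _ = CoprodI.of ed * (prodL (l' ++ [(⟨false, ed⟩ : Σ b, M b)]) * (CoprodI.of ed)⁻¹) := by
        rw [h1]; group
    _ = prodL ((⟨false, ed⟩ : Σ b, M b) :: l') := by
        rw [prodL_append, prodL_cons]
        simp [mul_assoc]
  have hLvalid : Valid (l' ++ [(⟨false, ed⟩ : Σ b, M b)]) := by
    rw [← hLe]; exact hLgood.1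
  have hl'valid : Valid l' := by
    refine ⟨fun p hp => hLvalid.1 p (List.mem_append_left _ hp), ?_⟩
    exact (List.isChain_append.1 hLvalid.2).1
  have hheadl' : (l'.head hl'ne).fst = true := by
    have h := hLgood.2.1
    rw [hLe, List.head?_append, List.head?_eq_head hl'ne] at h
    simpa using h
  have hvalid2 : Valid ((⟨false, ed⟩ : Σ b, M b) :: l') := by
    refine ⟨?_, ?_⟩
    · intro p hp
      rcases List.mem_cons.1 hp with rfl | hp
      · exact hed1
      · exact hl'valid.1 p hp
    · rw [List.Chain', List.isChain_cons]
      refine ⟨?_, hl'valid.2⟩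
      intro z hz
      rw [Option.mem_def, List.head?_eq_head hl'ne, Option.some_inj] at hz
      rw [← hz]
      show ¬ (false = (l'.head hl'ne).fst)
      rw [hheadl']
      simp
  have hlists := prodL_inj hLvalid hvalid2 hrot
  have hhd := congrArg List.head? hlists
  rw [List.head?_append, List.head?_eq_head hl'ne] at hhd
  simp only [Option.or_some, List.head?_cons, Option.some_inj, Option.getD_some] at hhd
  rw [hhd] at hheadl'
  simp at hheadl'

end FP2

namespace FP3


universe u v

variable (C : Type u) (D : Type v) [Group C] [Group D]

/-- The two-element family of groups. -/
def Fam : Bool → Type (max u v) :=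
  fun b => Bool.rec (ULift.{u} D) (ULift.{v} C) b

instance : ∀ b, Group (Fam C D b) :=
  fun b => Bool.rec (inferInstanceAs (Group (ULift.{u} D)))
    (inferInstanceAs (Group (ULift.{v} C))) b

instance [Nontrivial C] : Nontrivial (Fam C D true) :=
  inferInstanceAs (Nontrivial (ULift.{v} C))

instance [Nontrivial D] : Nontrivial (Fam C D false) :=
  inferInstanceAs (Nontrivial (ULift.{u} D))

def toFam : Coprod C D →* CoprodI (Fam C D) :=
  Coprod.lift
    ((CoprodI.of (M := Fam C D) (i := true)).comp
      (MulEquiv.ulift.symm : C ≃* ULift.{v} C).toMonoidHom)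
    ((CoprodI.of (M := Fam C D) (i := false)).comp
      (MulEquiv.ulift.symm : D ≃* ULift.{u} D).toMonoidHom)

def ofFam : CoprodI (Fam C D) →* Coprod C D :=
  CoprodI.lift fun b =>
    Bool.rec ((Coprod.inr : D →* Coprod C D).comp (MulEquiv.ulift : ULift.{u} D ≃* D).toMonoidHom)
      ((Coprod.inl : C →* Coprod C D).comp (MulEquiv.ulift : ULift.{v} C ≃* C).toMonoidHom) b

lemma ofFam_toFam (x : Coprod C D) : ofFam C D (toFam C D x) = x := by
  have h : (ofFam C D).comp (toFam C D) = MonoidHom.id _ := by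
    apply Coprod.hom_ext
    · ext c
      simp [toFam, ofFam, Coprod.lift_apply_inl, CoprodI.lift_of, MulEquiv.apply_symm_apply, MulEquiv.symm_apply_apply]
      rfl
    · ext d
      simp [toFam, ofFam, Coprod.lift_apply_inr, CoprodI.lift_of, MulEquiv.apply_symm_apply, MulEquiv.symm_apply_apply]
      rfl
  exact DFunLike.congr_fun h x

lemma toFam_ofFam (x : CoprodI (Fam C D)) : toFam C D (ofFam C D x) = x := by
  have h : (toFam C D).comp (ofFam C D) = MonoidHom.id _ := by
    apply CoprodI.ext_hom
    intro i
    cases i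
    · ext d
      simp [toFam, ofFam, Coprod.lift_apply_inr, CoprodI.lift_of, MulEquiv.apply_symm_apply, MulEquiv.symm_apply_apply]
      rfl
    · ext c
      simp [toFam, ofFam, Coprod.lift_apply_inl, CoprodI.lift_of, MulEquiv.apply_symm_apply, MulEquiv.symm_apply_apply]
      rfl
  exact DFunLike.congr_fun h x

lemma toFam_injective : Function.Injective (toFam C D) :=
  Function.LeftInverse.injective (ofFam_toFam C D)

lemma toFam_surjective : Function.Surjective (toFam C D) :=
  Function.RightInverse.surjective (toFam_ofFam C D)

end FP3


end FreeProductAux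

theorem stmt_10 (A B C D : Type*) [Group A] [Group B] [Group C] [Group D]
    [Nontrivial A] [Nontrivial B] [Nontrivial C] [Nontrivial D]
    (φ : A × B →* Coprod C D) (hφ : Function.Surjective φ) :
    ((φ.comp (MonoidHom.inl A B)).range = ⊥ ∧ (φ.comp (MonoidHom.inr A B)).range = ⊤) ∨
    ((φ.comp (MonoidHom.inl A B)).range = ⊤ ∧ (φ.comp (MonoidHom.inr A B)).range = ⊥) := by
  classical
  set ψ : A × B →* CoprodI (FP3.Fam C D) := (FP3.toFam C D).comp φ with hψ
  have hψsurj : Function.Surjective ψ := (FP3.toFam_surjective C D).comp hφ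
  have hmul : ∀ (a : A) (b : B),
      MonoidHom.inl A B a * MonoidHom.inr A B b = (a, b) ∧
      MonoidHom.inr A B b * MonoidHom.inl A B a = (a, b) := by
    intro a b
    constructor <;> simp [Prod.mk_mul_mk]
  have comm : ∀ x ∈ (ψ.comp (MonoidHom.inl A B)).range, ∀ y ∈ (ψ.comp (MonoidHom.inr A B)).range,
      x * y = y * x := by
    rintro x ⟨a, rfl⟩ y ⟨b, rfl⟩
    simp only [MonoidHom.comp_apply]
    rw [← map_mul, ← map_mul, (hmul a b).1, (hmul a b).2]
  have cover : ∀ g : CoprodI (FP3.Fam C D), ∃ x ∈ (ψ.comp (MonoidHom.inl A B)).range,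
      ∃ y ∈ (ψ.comp (MonoidHom.inr A B)).range, g = x * y := by
    intro g
    obtain ⟨⟨a, b⟩, rfl⟩ := hψsurj g
    refine ⟨ψ (MonoidHom.inl A B a), ⟨a, rfl⟩, ψ (MonoidHom.inr A B b), ⟨b, rfl⟩, ?_⟩
    rw [← map_mul, (hmul a b).1]
  have hbots : ∀ a : A, ψ.comp (MonoidHom.inl A B) a = 1 → φ (MonoidHom.inl A B a) = 1 := by
    intro a h
    apply FP3.toFam_injective C D
    rw [map_one]
    exact h
  have hbots' : ∀ b : B, ψ.comp (MonoidHom.inr A B) b = 1 → φ (MonoidHom.inr A B b) = 1 := by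
    intro b h
    apply FP3.toFam_injective C D
    rw [map_one]
    exact h
  rcases FP2.core _ _ comm cover with h | h
  · left
    have h1 : ∀ a : A, φ (MonoidHom.inl A B a) = 1 := by
      intro a
      refine hbots a (Subgroup.mem_bot.1 ?_)
      rw [← h]
      exact ⟨a, rfl⟩
    constructor
    · rw [Subgroup.eq_bot_iff_forall]
      rintro x ⟨a, rfl⟩
      exact h1 a
    · rw [MonoidHom.range_eq_top]
      intro g
      obtain ⟨⟨a, b⟩, rfl⟩ := hφ g
      refine ⟨b, ?_⟩
      have hab : φ (a, b) = φ (MonoidHom.inl A B a) * φ (MonoidHom.inr A B b) := by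
        rw [← map_mul, (hmul a b).1]
      rw [MonoidHom.comp_apply, hab, h1 a, one_mul]
  · right
    have h1 : ∀ b : B, φ (MonoidHom.inr A B b) = 1 := by
      intro b
      refine hbots' b (Subgroup.mem_bot.1 ?_)
      rw [← h]
      exact ⟨b, rfl⟩
    constructor
    · rw [MonoidHom.range_eq_top]
      intro g
      obtain ⟨⟨a, b⟩, rfl⟩ := hφ g
      refine ⟨a, ?_⟩
      have hab : φ (a, b) = φ (MonoidHom.inr A B b) * φ (MonoidHom.inl A B a) := by
        rw [← map_mul, (hmul a b).2]
      rw [MonoidHom.comp_apply, hab, h1 b, one_mul]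
    · rw [Subgroup.eq_bot_iff_forall]
      rintro x ⟨b, rfl⟩
      exact h1 b
end

section
/- A non-trivial free product of groups is not isomorphic to a non-trivial direct product: if C, D are non-trivial groups and A, B are non-trivial groups, then C * D is not isomorphic to A × B. -/
set_option linter.unusedSectionVars false
set_option maxHeartbeats 1000000
open Monoid

namespace FPAux
open CoprodI CoprodI.Word List

variable {ι : Type*} [DecidableEq ι] {M : ι → Type*} [∀ i, Group (M i)]
  [∀ i, DecidableEq (M i)]

def pl (L : List (Σ i, M i)) : CoprodI M := (L.map fun x => CoprodI.of x.2).prod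

@[simp] lemma pl_nil : pl ([] : List (Σ i, M i)) = 1 := rfl
lemma pl_cons (a : Σ i, M i) (L : List (Σ i, M i)) : pl (a :: L) = CoprodI.of a.2 * pl L := by
  simp [pl]
lemma pl_append (L₁ L₂ : List (Σ i, M i)) : pl (L₁ ++ L₂) = pl L₁ * pl L₂ := by simp [pl]

def Red (L : List (Σ i, M i)) : Prop :=
  (∀ l ∈ L, Sigma.snd l ≠ 1) ∧ L.Chain' fun l l' => Sigma.fst l ≠ Sigma.fst l'

lemma word_prod (w : Word M) : Word.equiv w.prod = w := Word.equiv.apply_symm_apply w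
lemma prod_word (g : CoprodI M) : (Word.equiv g).prod = g := Word.equiv.symm_apply_apply g
lemma pl_toList (g : CoprodI M) : pl (Word.equiv g).toList = g := prod_word g
lemma red_toList (g : CoprodI M) : Red (Word.equiv g).toList :=
  ⟨(Word.equiv g).ne_one, (Word.equiv g).chain_ne⟩

lemma word_pl {L : List (Σ i, M i)} (h : Red L) : (Word.equiv (pl L)).toList = L := by
  have : Word.equiv (Word.prod ⟨L, h.1, h.2⟩) = ⟨L, h.1, h.2⟩ := word_prod _
  simpa [Word.prod, pl] using congrArg Word.toList this

/-- length of the reduced word of `g` -/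
def len (g : CoprodI M) : ℕ := (Word.equiv g).toList.length

lemma len_pl {L : List (Σ i, M i)} (h : Red L) : len (pl L) = L.length := by
  rw [len, word_pl h]

lemma pl_inj {L₁ L₂ : List (Σ i, M i)} (h₁ : Red L₁) (h₂ : Red L₂) (h : pl L₁ = pl L₂) :
    L₁ = L₂ := by rw [← word_pl h₁, ← word_pl h₂, h]

lemma pl_eq_one_iff {L : List (Σ i, M i)} (h : Red L) : pl L = 1 ↔ L = [] := by
  constructor
  · intro hL
    have h0 : Red ([] : List (Σ i, M i)) := ⟨by simp, List.isChain_nil⟩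
    exact pl_inj h h0 (by simpa using hL)
  · rintro rfl; rfl

variable {L L₁ L₂ : List (Σ i, M i)}

lemma Red.append_iff :
    Red (L₁ ++ L₂) ↔ Red L₁ ∧ Red L₂ ∧
      (∀ x ∈ L₁.getLast?, ∀ y ∈ L₂.head?, Sigma.fst x ≠ Sigma.fst y) := by
  unfold Red
  unfold List.Chain'
  rw [List.isChain_append]
  constructor
  · rintro ⟨h1, h2, h3, h4⟩
    exact ⟨⟨fun l hl => h1 l (by simp [hl]), h2⟩, ⟨fun l hl => h1 l (by simp [hl]), h3⟩, h4⟩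
  · rintro ⟨⟨a1, a2⟩, ⟨b1, b2⟩, h⟩
    refine ⟨fun l hl => ?_, a2, b2, h⟩
    rcases List.mem_append.1 hl with h' | h'
    exacts [a1 l h', b1 l h']

lemma Red.left (h : Red (L₁ ++ L₂)) : Red L₁ := (Red.append_iff.1 h).1
lemma Red.right (h : Red (L₁ ++ L₂)) : Red L₂ := (Red.append_iff.1 h).2.1

def invL (L : List (Σ i, M i)) : List (Σ i, M i) :=
  (L.map fun x => (⟨x.1, x.2⁻¹⟩ : Σ i, M i)).reverse

lemma invL_cons (a : Σ i, M i) (L : List (Σ i, M i)) :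
    invL (a :: L) = invL L ++ [⟨a.1, a.2⁻¹⟩] := by simp [invL]

lemma pl_invL (L : List (Σ i, M i)) : pl (invL L) = (pl L)⁻¹ := by
  induction L with
  | nil => simp [invL, pl]
  | cons a L ih =>
    rw [invL_cons, pl_append, pl_cons, pl_cons, ih]
    simp [pl, mul_inv_rev]

lemma Red.invL (h : Red L) : Red (FPAux.invL L) := by
  constructor
  · intro l hl
    simp only [FPAux.invL, List.mem_reverse, List.mem_map] at hl
    obtain ⟨x, hx, rfl⟩ := hl
    simpa using h.1 x hx
  · unfold List.Chain'
    rw [FPAux.invL, List.isChain_reverse]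
    refine (List.isChain_map _).2 ?_
    exact List.IsChain.imp (fun a b hab => hab.symm) h.2

@[simp] lemma invL_length : (invL L).length = L.length := by simp [invL]

lemma head?_invL : (invL L).head? = L.getLast?.map fun x => ⟨x.1, x.2⁻¹⟩ := by
  rw [invL, List.head?_reverse, List.getLast?_map]

lemma getLast?_invL : (invL L).getLast? = L.head?.map fun x => ⟨x.1, x.2⁻¹⟩ := by
  rw [invL, List.getLast?_reverse, List.head?_map]

lemma toList_inv (g : CoprodI M) :
    (Word.equiv g⁻¹).toList = invL (Word.equiv g).toList := by
  rw [← word_pl (red_toList g).invL, pl_invL, pl_toList]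

lemma len_inv (g : CoprodI M) : len g⁻¹ = len g := by
  rw [len, toList_inv, invL_length]; rfl

/-- appending a letter of the same index as the last letter does not increase length -/
lemma len_mul_le {g : CoprodI M} {i : ι} (x : M i)
    (h : (Word.equiv g).toList.getLast?.map Sigma.fst = some i) :
    len (g * CoprodI.of x) ≤ len g := by
  rcases List.eq_nil_or_concat (Word.equiv g).toList with hnil | ⟨L₀, b, hL⟩
  · rw [hnil] at h; simp only [List.getLast?_nil, Option.map_none] at h; cases h
  · rw [List.concat_eq_append] at hL
    have hred : Red (L₀ ++ [b]) := hL ▸ red_toList g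
    have hb : b.1 = i := by
      rw [hL] at h; simpa using h
    subst hb
    have hg : g = pl L₀ * CoprodI.of b.2 := by
      conv_lhs => rw [← pl_toList g, hL]
      rw [pl_append, pl_cons]; simp
    have hmul : g * CoprodI.of x = pl L₀ * CoprodI.of (b.2 * x) := by
      rw [hg, map_mul, mul_assoc]
    have hlg : len g = L₀.length + 1 := by
      rw [len, hL]; simp
    by_cases hyx : b.2 * x = 1
    · rw [hmul, hyx, map_one, mul_one, len_pl hred.left, hlg]
      omega
    · have hred' : Red (L₀ ++ [⟨b.1, b.2 * x⟩]) := by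
        rw [Red.append_iff] at hred ⊢
        refine ⟨hred.1, ⟨by simpa using hyx, List.isChain_singleton _⟩, ?_⟩
        intro a ha c hc
        simp only [List.head?_cons, Option.mem_def, Option.some.injEq] at hc
        have := hred.2.2 a ha b (by simp)
        rw [← hc]; exact this
      have : g * CoprodI.of x = pl (L₀ ++ [⟨b.1, b.2 * x⟩]) := by
        rw [hmul, pl_append, pl_cons]; simp
      rw [this, len_pl hred', hlg]; simp

lemma len_mul_le' {g : CoprodI M} {i : ι} (x : M i) :
    len (g * CoprodI.of x) ≤ len g + 1 := by
  by_cases hx : x = 1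
  · subst hx; rw [map_one, mul_one]; omega
  by_cases hlast : (Word.equiv g).toList.getLast?.map Sigma.fst = some i
  · exact le_trans (len_mul_le x hlast) (by omega)
  · have hred' : Red ((Word.equiv g).toList ++ [⟨i, x⟩]) := by
      rw [Red.append_iff]
      refine ⟨red_toList g, ⟨by simpa using hx, List.isChain_singleton _⟩, ?_⟩
      intro a ha c hc
      simp only [List.head?_cons, Option.mem_def, Option.some.injEq] at hc
      subst hc
      intro hfst
      exact hlast (by rw [Option.mem_def] at ha; rw [ha]; simp [hfst])
    have : g * CoprodI.of x = pl ((Word.equiv g).toList ++ [⟨i, x⟩]) := by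
      rw [pl_append, pl_cons, pl_toList]; simp
    rw [this, len_pl hred']
    simp [len]

section Z

variable {i j : ι} {c : M i} {d : M j}

/-- the alternating list for `(cd)^k` -/
def VL (c : M i) (d : M j) : ℕ → List (Σ i, M i)
  | 0 => []
  | k + 1 => ⟨i, c⟩ :: ⟨j, d⟩ :: VL c d k

lemma VL_succ_eq_append (k : ℕ) :
    VL c d (k + 1) = (⟨i, c⟩ :: [⟨j, d⟩]) ++ VL c d k := rfl

@[simp] lemma VL_length (k : ℕ) : (VL c d k).length = 2 * k := by
  induction k with
  | zero => rfl
  | succ k ih => rw [VL]; simp [ih]; ring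

lemma VL_append (k m : ℕ) : VL c d (k + m) = VL c d k ++ VL c d m := by
  induction k with
  | zero => simp [VL]
  | succ k ih => rw [Nat.succ_add, VL, VL, ih]; rfl

lemma pl_VL (k : ℕ) : pl (VL c d k) = (CoprodI.of c * CoprodI.of d) ^ k := by
  induction k with
  | zero => rfl
  | succ k ih => rw [VL, pl_cons, pl_cons, ih, pow_succ']; group

lemma head?_VL (k : ℕ) (hk : 0 < k) : (VL c d k).head? = some ⟨i, c⟩ := by
  cases k with
  | zero => omega
  | succ k => rfl

lemma getLast?_VL (k : ℕ) (hk : 0 < k) : (VL c d k).getLast? = some ⟨j, d⟩ := by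
  induction k with
  | zero => omega
  | succ k ih =>
    cases k with
    | zero => rfl
    | succ m => rw [VL_succ_eq_append, List.getLast?_append_of_ne_nil]
                · exact ih (by omega)
                · intro h; have := congrArg List.length h; simp at this

lemma red_VL (hij : i ≠ j) (hc : c ≠ 1) (hd : d ≠ 1) (k : ℕ) : Red (VL c d k) := by
  induction k with
  | zero => exact ⟨by simp [VL], by simp [VL, List.Chain']⟩
  | succ k ih =>
    refine ⟨?_, ?_⟩
    · intro l hl
      simp only [VL, List.mem_cons] at hl
      rcases hl with h | h | h
      · subst h; exact hc
      · subst h; exact hd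
      · exact ih.1 l h
    · rw [VL]
      refine List.isChain_cons_cons.2 ⟨by simpa using hij, ?_⟩
      cases k with
      | zero => simp [VL, List.Chain']
      | succ m =>
        rw [VL]
        exact List.isChain_cons_cons.2 ⟨by simpa using hij.symm, ih.2⟩

lemma VL_take_even (s k : ℕ) (h : s ≤ k) : (VL c d k).take (2 * s) = VL c d s := by
  induction s generalizing k with
  | zero => simp [VL]
  | succ s ih =>
    cases k with
    | zero => omega
    | succ k =>
      rw [VL, VL, show 2 * (s+1) = (2 * s) + 1 + 1 by omega]
      simp [ih k (by omega)]

lemma VL_take_odd (s k : ℕ) (h : s < k) :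
    (VL c d k).take (2 * s + 1) = VL c d s ++ [⟨i, c⟩] := by
  induction s generalizing k with
  | zero =>
    cases k with
    | zero => omega
    | succ k => simp [VL]
  | succ s ih =>
    cases k with
    | zero => omega
    | succ k =>
      rw [VL, VL, show 2 * (s+1) + 1 = (2 * s + 1) + 1 + 1 by omega]
      simp [ih k (by omega)]

lemma len_one : len (1 : CoprodI M) = 0 := by
  have h : Red ([] : List (Σ i, M i)) := ⟨by simp, List.isChain_nil⟩
  have := len_pl h
  simpa using this

lemma len_mul_pow_le (g : CoprodI M) (x : M i) (y : M j) (m : ℕ) :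
    len (g * (CoprodI.of x * CoprodI.of y) ^ m) ≤ len g + 2 * m := by
  induction m with
  | zero => simp
  | succ m ih =>
    rw [pow_succ, ← mul_assoc, ← mul_assoc]
    calc len (g * (CoprodI.of x * CoprodI.of y) ^ m * CoprodI.of x * CoprodI.of y)
        ≤ len (g * (CoprodI.of x * CoprodI.of y) ^ m * CoprodI.of x) + 1 := len_mul_le' _
      _ ≤ len (g * (CoprodI.of x * CoprodI.of y) ^ m) + 1 + 1 := by
          have := len_mul_le' (g := g * (CoprodI.of x * CoprodI.of y) ^ m) x; omega
      _ ≤ len g + 2 * (m + 1) := by omega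

lemma len_mul_pow_le_matching (g : CoprodI M) (x : M i) (y : M j) {m : ℕ} (hm : 0 < m)
    (h : (Word.equiv g).toList.getLast?.map Sigma.fst = some i) :
    len (g * (CoprodI.of x * CoprodI.of y) ^ m) + 1 ≤ len g + 2 * m := by
  obtain ⟨m', rfl⟩ : ∃ m', m = m' + 1 := ⟨m - 1, by omega⟩
  rw [pow_succ', ← mul_assoc, ← mul_assoc]
  calc len (g * CoprodI.of x * CoprodI.of y * (CoprodI.of x * CoprodI.of y) ^ m') + 1
      ≤ len (g * CoprodI.of x * CoprodI.of y) + 2 * m' + 1 := by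
        have := len_mul_pow_le (g * CoprodI.of x * CoprodI.of y) x y m'; omega
    _ ≤ len (g * CoprodI.of x) + 1 + 2 * m' + 1 := by
        have := len_mul_le' (g := g * CoprodI.of x) y; omega
    _ ≤ len g + 2 * (m' + 1) := by
        have := len_mul_le x h; omega

section Centralizer

lemma z_pow_eq_one_iff (hij : i ≠ j) (hc : c ≠ 1) (hd : d ≠ 1) (k : ℕ) : (CoprodI.of c * CoprodI.of d) ^ k = 1 ↔ k = 0 := by
  constructor
  · intro h
    rw [← pl_VL] at h
    have := (pl_eq_one_iff (red_VL hij hc hd k)).1 h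
    have := congrArg List.length this
    simpa using this
  · rintro rfl; simp

lemma z_zpow_eq_one_iff (hij : i ≠ j) (hc : c ≠ 1) (hd : d ≠ 1) (t : ℤ) : (CoprodI.of c * CoprodI.of d) ^ t = 1 ↔ t = 0 := by
  constructor
  · intro h
    rcases lt_trichotomy t 0 with ht | ht | ht
    · have : ((CoprodI.of c * CoprodI.of d) ^ (-t).toNat)⁻¹ = 1 := by
        rw [← zpow_natCast, Int.toNat_of_nonneg (by omega), ← zpow_neg, neg_neg, h]
      rw [inv_eq_one] at this
      have := (z_pow_eq_one_iff hij hc hd _).1 this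
      omega
    · exact ht
    · have : (CoprodI.of c * CoprodI.of d) ^ t.toNat = 1 := by
        rw [← zpow_natCast, Int.toNat_of_nonneg (by omega), h]
      have := (z_pow_eq_one_iff hij hc hd _).1 this
      omega
  · rintro rfl; simp

lemma step (hij : i ≠ j) (hc : c ≠ 1) (hd : d ≠ 1) {k : ℕ} (hk : 0 < k) {u : CoprodI M}
    (hu : u * (CoprodI.of c * CoprodI.of d) ^ k = (CoprodI.of c * CoprodI.of d) ^ k * u)
    (hhead : ∀ a ∈ (Word.equiv u).toList.head?, Sigma.fst a ≠ j)
    (hlast : ∀ a ∈ (Word.equiv u).toList.getLast?, Sigma.fst a ≠ i) :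
    (∃ s : ℕ, u = (CoprodI.of c * CoprodI.of d) ^ s) ∨
    (∃ u₂ : CoprodI M, u₂ * (CoprodI.of c * CoprodI.of d) ^ k =
        (CoprodI.of c * CoprodI.of d) ^ k * u₂ ∧
      u = (CoprodI.of c * CoprodI.of d) ^ k * u₂ ∧ len u₂ + 2 * k = len u) := by
  set z := CoprodI.of c * CoprodI.of d with hz
  set Lu := (Word.equiv u).toList with hLu
  have hredu : Red Lu := red_toList u
  have hredV : Red (VL c d k) := red_VL hij hc hd k
  have hred1 : Red (Lu ++ VL c d k) := by
    rw [Red.append_iff]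
    refine ⟨hredu, hredV, ?_⟩
    intro a ha b hb
    rw [head?_VL k hk, Option.mem_def, Option.some.injEq] at hb
    subst hb
    exact hlast a ha
  have hred2 : Red (VL c d k ++ Lu) := by
    rw [Red.append_iff]
    refine ⟨hredV, hredu, ?_⟩
    intro a ha b hb
    rw [getLast?_VL k hk, Option.mem_def, Option.some.injEq] at ha
    subst ha
    exact fun hfst => hhead b hb hfst.symm
  have hE : Lu ++ VL c d k = VL c d k ++ Lu := by
    apply pl_inj hred1 hred2
    rw [pl_append, pl_append, pl_toList, pl_VL, ← hz]
    exact hu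
  by_cases hn : Lu.length ≤ 2 * k
  · left
    have htake : Lu = (VL c d k).take Lu.length := by
      conv_lhs => rw [← List.take_left (l₁ := Lu) (l₂ := VL c d k)]
      rw [hE, List.take_append]
      simp [hn, Nat.sub_eq_zero_of_le]
    rcases Nat.even_or_odd Lu.length with ⟨s, hs⟩ | ⟨s, hs⟩
    · refine ⟨s, ?_⟩
      have hLu2 : Lu = VL c d s := by
        rw [htake, show Lu.length = 2 * s by omega, VL_take_even s k (by omega)]
      have : u = pl Lu := by rw [hLu, pl_toList]
      rw [this, hLu2, pl_VL]
    · exfalso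
      have : Lu = VL c d s ++ [⟨i, c⟩] := by
        rw [htake, show Lu.length = 2 * s + 1 by omega, VL_take_odd s k (by omega)]
      have hlast' : Lu.getLast? = some ⟨i, c⟩ := by
        rw [this]; simp
      exact hlast ⟨i, c⟩ (by rw [hlast']; rfl) rfl
  · right
    push_neg at hn
    have htake : Lu.take (2 * k) = VL c d k := by
      have h1 : (Lu ++ VL c d k).take (2 * k) = Lu.take (2 * k) := by
        rw [List.take_append]
        simp [Nat.sub_eq_zero_of_le (le_of_lt hn)]
      have h2 : (VL c d k ++ Lu).take (2 * k) = VL c d k := by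
        have := List.take_left (l₁ := VL c d k) (l₂ := Lu)
        rwa [VL_length] at this
      rw [← h1, hE, h2]
    have hsplit : Lu = VL c d k ++ Lu.drop (2 * k) := by
      conv_lhs => rw [← List.take_append_drop (2 * k) Lu]
      rw [htake]
    have hred₂ : Red (Lu.drop (2 * k)) := by
      rw [hsplit] at hredu
      exact hredu.right
    refine ⟨pl (Lu.drop (2 * k)), ?_, ?_, ?_⟩
    · have hu' : u = z ^ k * pl (Lu.drop (2 * k)) := by
        rw [← pl_toList u, ← hLu]
        conv_lhs => rw [hsplit]
        rw [pl_append, pl_VL, ← hz]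
      apply mul_left_cancel (a := z ^ k)
      rw [← mul_assoc, ← hu', ← hu, hu']
    · have h0 : u = pl Lu := by rw [hLu, pl_toList]
      rw [h0]
      conv_lhs => rw [hsplit]
      rw [pl_append, pl_VL, ← hz]
    · have h1 : len u = Lu.length := by rw [len, hLu]
      rw [len_pl hred₂, h1]
      simp
      omega

theorem centralizer_subset_zpowers (hij : i ≠ j) (hc : c ≠ 1) (hd : d ≠ 1)
    {k : ℕ} (hk : 0 < k) {u : CoprodI M}
    (hu : u * (CoprodI.of c * CoprodI.of d) ^ k = (CoprodI.of c * CoprodI.of d) ^ k * u) :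
    ∃ s : ℤ, u = (CoprodI.of c * CoprodI.of d) ^ s := by
  set z := CoprodI.of c * CoprodI.of d with hz
  suffices H : ∀ n : ℕ, ∀ u : CoprodI M, len u = n → u * z ^ k = z ^ k * u →
      ∃ s : ℤ, u = z ^ s from H (len u) u rfl hu
  intro n
  induction n using Nat.strong_induction_on with
  | _ n IH =>
    intro u hn hu
    subst hn
    by_cases hhead : ∀ a ∈ (Word.equiv u).toList.head?, Sigma.fst a ≠ j
    · by_cases hlast : ∀ a ∈ (Word.equiv u).toList.getLast?, Sigma.fst a ≠ i
      · -- step applies directly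
        rcases step hij hc hd hk hu hhead hlast with ⟨s, rfl⟩ | ⟨u₂, hcomm, rfl, hlen⟩
        · exact ⟨(s : ℤ), by rw [zpow_natCast]⟩
        · obtain ⟨t, rfl⟩ := IH (len u₂) (by omega) u₂ rfl hcomm
          exact ⟨(k : ℤ) + t, by rw [zpow_add, zpow_natCast]⟩
      · -- last letter has index i, head does not have index j: length contradiction
        exfalso
        push_neg at hlast
        obtain ⟨a, ha, hafst⟩ := hlast
        have hlast' : (Word.equiv u).toList.getLast?.map Sigma.fst = some i := by
          rw [Option.mem_def] at ha
          rw [ha]; simp [hafst]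
        have h1 : Red ((VL c d k) ++ (Word.equiv u).toList) := by
          rw [Red.append_iff]
          refine ⟨red_VL hij hc hd k, red_toList u, ?_⟩
          intro x hx y hy
          rw [getLast?_VL k hk, Option.mem_def, Option.some.injEq] at hx
          subst hx
          exact fun hfst => hhead y hy hfst.symm
        have h2 : len (z ^ k * u) = 2 * k + len u := by
          have : z ^ k * u = pl ((VL c d k) ++ (Word.equiv u).toList) := by
            rw [pl_append, pl_VL, pl_toList, hz]
          rw [this, len_pl h1]
          simp [len]
        have h3 : len (u * z ^ k) + 1 ≤ len u + 2 * k :=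
          len_mul_pow_le_matching u c d hk hlast'
        rw [hu, h2] at h3
        omega
    · push_neg at hhead
      obtain ⟨b, hb, hbfst⟩ := hhead
      by_cases hlast : ∀ a ∈ (Word.equiv u).toList.getLast?, Sigma.fst a ≠ i
      · -- head has index j, last does not have index i: length contradiction
        exfalso
        have h1 : Red ((Word.equiv u).toList ++ VL c d k) := by
          rw [Red.append_iff]
          refine ⟨red_toList u, red_VL hij hc hd k, ?_⟩
          intro x hx y hy
          rw [head?_VL k hk, Option.mem_def, Option.some.injEq] at hy
          subst hy
          exact hlast x hx
        have h2 : len (u * z ^ k) = len u + 2 * k := by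
          have : u * z ^ k = pl ((Word.equiv u).toList ++ VL c d k) := by
            rw [pl_append, pl_VL, pl_toList, hz]
          rw [this, len_pl h1]
          simp [len]
        -- bound len (z ^ k * u) via inverses
        have hlastinv : (Word.equiv u⁻¹).toList.getLast?.map Sigma.fst = some j := by
          rw [toList_inv, getLast?_invL]
          rw [Option.mem_def] at hb
          rw [hb]
          simp [hbfst]
        have hzinv : z⁻¹ = CoprodI.of d⁻¹ * CoprodI.of c⁻¹ := by
          rw [hz, mul_inv_rev, map_inv, map_inv]
        have hinv : (z ^ k * u)⁻¹ = u⁻¹ * (CoprodI.of d⁻¹ * CoprodI.of c⁻¹) ^ k := by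
          rw [mul_inv_rev, ← hzinv, inv_pow]
        have h3 : len (u⁻¹ * (CoprodI.of d⁻¹ * CoprodI.of c⁻¹) ^ k) + 1 ≤ len u⁻¹ + 2 * k :=
          len_mul_pow_le_matching u⁻¹ d⁻¹ c⁻¹ hk hlastinv
        rw [← hinv, len_inv, len_inv] at h3
        rw [← hu, h2] at h3
        omega
      · -- both bad: pass to u⁻¹
        push_neg at hlast
        obtain ⟨a, ha, hafst⟩ := hlast
        have hcomm : u⁻¹ * z ^ k = z ^ k * u⁻¹ := by
          have h : Commute u (z ^ k) := hu
          exact h.inv_left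
        have hh : ∀ x ∈ (Word.equiv u⁻¹).toList.head?, Sigma.fst x ≠ j := by
          intro x hx
          rw [toList_inv, head?_invL, Option.mem_def] at hx
          rw [Option.mem_def] at ha
          rw [ha] at hx
          simp at hx
          subst hx
          simp [hafst, hij]
        have hl : ∀ x ∈ (Word.equiv u⁻¹).toList.getLast?, Sigma.fst x ≠ i := by
          intro x hx
          rw [toList_inv, getLast?_invL, Option.mem_def] at hx
          rw [Option.mem_def] at hb
          rw [hb] at hx
          simp at hx
          subst hx
          simp [hbfst, hij.symm]
        rcases step hij hc hd hk hcomm hh hl with ⟨s, hs⟩ | ⟨u₂, hcomm₂, hsplit, hlen⟩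
        · exact ⟨-(s : ℤ), by rw [← inv_inv u, hs, zpow_neg, zpow_natCast]⟩
        · have hlenu : len u₂ < len u := by rw [← len_inv u]; omega
          obtain ⟨t, rfl⟩ := IH (len u₂) hlenu u₂ rfl hcomm₂
          refine ⟨-((k : ℤ) + t), ?_⟩
          rw [← inv_inv u, hsplit, zpow_neg, zpow_add, zpow_natCast]

theorem key_centralizer (hij : i ≠ j) (hc : c ≠ 1) (hd : d ≠ 1) (t : ℤ) (ht : t ≠ 0)
    (u : CoprodI M) (hcu : u * (CoprodI.of c * CoprodI.of d) ^ t =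
      (CoprodI.of c * CoprodI.of d) ^ t * u) :
    ∃ s : ℤ, u = (CoprodI.of c * CoprodI.of d) ^ s := by
  set z := CoprodI.of c * CoprodI.of d with hz
  have hC : Commute u (z ^ t) := hcu
  rcases lt_or_gt_of_ne ht with h | h
  · have h3 : (z ^ t)⁻¹ = z ^ ((-t).toNat : ℕ) := by
      rw [← zpow_natCast, Int.toNat_of_nonneg (by omega), zpow_neg]
    have h2 : Commute u (z ^ ((-t).toNat : ℕ)) := h3 ▸ hC.inv_right
    exact centralizer_subset_zpowers hij hc hd (k := (-t).toNat) (by omega) h2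
  · have h3 : z ^ t = z ^ (t.toNat : ℕ) := by
      rw [← zpow_natCast, Int.toNat_of_nonneg (by omega)]
    have h2 : Commute u (z ^ (t.toNat : ℕ)) := h3 ▸ hC
    exact centralizer_subset_zpowers hij hc hd (k := t.toNat) (by omega) h2

theorem no_direct_product (hij : i ≠ j) (hc : c ≠ 1) (hd : d ≠ 1)
    {P Q : Type*} [Group P] [Group Q] [Nontrivial P] [Nontrivial Q]
    (f : CoprodI M ≃* P × Q) : False := by
  set z := CoprodI.of c * CoprodI.of d with hz
  have comm_of_f : ∀ x y : CoprodI M, f x * f y = f y * f x → x * y = y * x := by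
    intro x y h
    apply f.injective
    rw [map_mul, map_mul, h]
  set p := (f z).1 with hp
  set q := (f z).2 with hq
  have hfz : f z = (p, q) := rfl
  set m := f.symm (p, 1) with hm
  set n := f.symm (1, q) with hn
  have hfm : f m = (p, 1) := f.apply_symm_apply _
  have hfn : f n = (1, q) := f.apply_symm_apply _
  have hmn : m * n = z := by
    apply f.injective
    rw [map_mul, hfm, hfn, hfz]
    simp
  have hcom : m * n = n * m := by
    apply comm_of_f
    rw [hfm, hfn]
    simp
  have hCom : Commute m n := hcom
  have hmz : m * z = z * m := by
    have : Commute m z := by rw [← hmn]; exact (Commute.refl m).mul_right hCom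
    exact this
  have hnz : n * z = z * n := by
    have : Commute n z := by rw [← hmn]; exact hCom.symm.mul_right (Commute.refl n)
    exact this
  obtain ⟨si, hmi⟩ := key_centralizer hij hc hd 1 one_ne_zero m (by simpa using hmz)
  obtain ⟨sj, hnj⟩ := key_centralizer hij hc hd 1 one_ne_zero n (by simpa using hnz)
  have hsum : si + sj = 1 := by
    have h1 : z ^ (si + sj) = z ^ (1 : ℤ) := by
      rw [zpow_add, ← hmi, ← hnj, hmn, zpow_one]
    have h2 : z ^ (si + sj - 1) = 1 := by
      rw [zpow_sub, h1, zpow_one, mul_inv_cancel]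
    have := (z_zpow_eq_one_iff hij hc hd _).1 h2
    omega
  have hfzsi : f (z ^ si) = (p, 1) := by rw [← hmi, hfm]
  by_cases hsi : si = 0
  · -- m = 1, n = z, so p = 1 and f z = (1, q)
    have hp1 : p = 1 := by
      have : ((p, 1) : P × Q) = (1, 1) := by
        rw [← hfzsi, hsi, zpow_zero, map_one]; rfl
      exact congrArg Prod.fst this
    obtain ⟨p₀, hp₀⟩ := exists_ne (1 : P)
    set m₀ := f.symm (p₀, 1) with hm₀
    have hfm₀ : f m₀ = (p₀, 1) := f.apply_symm_apply _
    have hm₀z : m₀ * z = z * m₀ := by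
      apply comm_of_f
      rw [hfm₀, hfz, hp1]
      simp
    obtain ⟨s, hs⟩ := key_centralizer hij hc hd 1 one_ne_zero m₀ (by simpa using hm₀z)
    have hfzs : f (z ^ s) = (p₀, 1) := by rw [← hs, hfm₀]
    have : f (z ^ s) = (1, q ^ s) := by
      rw [map_zpow, hfz, hp1]
      ext <;> simp
    rw [hfzs] at this
    exact hp₀ (congrArg Prod.fst this)
  · -- si ≠ 0
    obtain ⟨q₀, hq₀⟩ := exists_ne (1 : Q)
    set n₀ := f.symm (1, q₀) with hn₀
    have hfn₀ : f n₀ = (1, q₀) := f.apply_symm_apply _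
    have hn₀z : n₀ * z ^ si = z ^ si * n₀ := by
      apply comm_of_f
      rw [hfn₀, hfzsi]
      simp
    obtain ⟨s, hs⟩ := key_centralizer hij hc hd si hsi n₀ hn₀z
    have hs0 : s ≠ 0 := by
      rintro rfl
      apply hq₀
      have : f n₀ = 1 := by rw [hs, zpow_zero, map_one]
      rw [hfn₀] at this
      exact congrArg Prod.snd this
    have hfzs : f (z ^ s) = (1, q₀) := by rw [← hs, hfn₀]
    have e1 : f (z ^ (si * s)) = (p ^ s, 1) := by
      rw [zpow_mul, map_zpow, hfzsi]
      ext <;> simp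
    have e2 : f (z ^ (si * s)) = (1, q₀ ^ si) := by
      rw [mul_comm si s, zpow_mul, map_zpow, hfzs]
      ext <;> simp
    have hps : p ^ s = 1 := by
      have := e1.symm.trans e2
      exact congrArg Prod.fst this
    have : z ^ (si * s) = 1 := by
      apply f.injective
      rw [e1, hps, map_one]
      rfl
    have := (z_zpow_eq_one_iff hij hc hd _).1 this
    exact (mul_ne_zero hsi hs0) this

end Centralizer

end Z

section Glue

variable {C D : Type u} [Group C] [Group D]

/-- the two-element family -/
abbrev Fam (C D : Type u) : Bool → Type u := fun b => bif b then C else D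

instance : ∀ b, Group (Fam C D b) := fun b =>
  Bool.rec (inferInstanceAs (Group D)) (inferInstanceAs (Group C)) b

noncomputable instance : ∀ b, DecidableEq (Fam C D b) := fun _ => Classical.decEq _

/-- hom from indexed coproduct to binary coproduct -/
def toCoprod : CoprodI (Fam C D) →* Coprod C D :=
  CoprodI.lift fun b =>
    Bool.rec (motive := fun b => Fam C D b →* Coprod C D) Coprod.inr Coprod.inl b

/-- hom from binary coproduct to indexed coproduct -/
def ofCoprod : Coprod C D →* CoprodI (Fam C D) :=
  Coprod.lift (CoprodI.of (M := Fam C D) (i := true)) (CoprodI.of (M := Fam C D) (i := false))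

lemma toCoprod_comp_ofCoprod :
    (toCoprod : CoprodI (Fam C D) →* Coprod C D).comp ofCoprod = MonoidHom.id _ := by
  apply Coprod.hom_ext
  · ext x
    simp only [MonoidHom.comp_apply, MonoidHom.id_apply, ofCoprod, Coprod.lift_apply_inl,
      toCoprod]
    exact (CoprodI.lift_of (M := Fam C D) _ (i := true) x).trans rfl
  · ext x
    simp only [MonoidHom.comp_apply, MonoidHom.id_apply, ofCoprod, Coprod.lift_apply_inr,
      toCoprod]
    exact (CoprodI.lift_of (M := Fam C D) _ (i := false) x).trans rfl

lemma ofCoprod_comp_toCoprod :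
    (ofCoprod : Coprod C D →* CoprodI (Fam C D)).comp toCoprod = MonoidHom.id _ := by
  apply CoprodI.ext_hom
  intro b
  cases b
  · ext x
    simp only [MonoidHom.comp_apply, MonoidHom.id_apply, toCoprod]
    rw [(CoprodI.lift_of (M := Fam C D) _ (i := false) x).trans rfl]
    show ofCoprod (Coprod.inr x) = _
    simp only [ofCoprod]
    rw [Coprod.lift_apply_inr]
  · ext x
    simp only [MonoidHom.comp_apply, MonoidHom.id_apply, toCoprod]
    rw [(CoprodI.lift_of (M := Fam C D) _ (i := true) x).trans rfl]
    show ofCoprod (Coprod.inl x) = _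
    simp only [ofCoprod]
    rw [Coprod.lift_apply_inl]

/-- the binary coproduct as an indexed coproduct -/
noncomputable def coprodEquivCoprodI : CoprodI (Fam C D) ≃* Coprod C D :=
  MonoidHom.toMulEquiv toCoprod ofCoprod ofCoprod_comp_toCoprod toCoprod_comp_ofCoprod

end Glue

end FPAux

open FPAux in
theorem stmt_11_aux {A B : Type*} {C : Type u} {D : Type v} [Group A] [Group B] [Group C]
    [Group D] [Nontrivial A] [Nontrivial B] [Nontrivial C] [Nontrivial D]
    (e : Coprod C D ≃* A × B) : False := by
  obtain ⟨c₀, hc₀⟩ := exists_ne (1 : C)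
  obtain ⟨d₀, hd₀⟩ := exists_ne (1 : D)
  let C' := ULift.{v} C
  let D' := ULift.{u} D
  have e' : Coprod C' D' ≃* A × B :=
    (MulEquiv.coprodCongr MulEquiv.ulift MulEquiv.ulift).trans e
  have F : CoprodI (Fam C' D') ≃* A × B := coprodEquivCoprodI.trans e'
  refine no_direct_product (i := true) (j := false) (M := Fam C' D')
    (c := ULift.up c₀) (d := ULift.up d₀) (by simp) ?_ ?_ F
  · intro h
    exact hc₀ (congrArg ULift.down h)
  · intro h
    exact hd₀ (congrArg ULift.down h)

theorem stmt_11 (A B C D : Type*) [Group A] [Group B] [Group C] [Group D]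
    [Nontrivial A] [Nontrivial B] [Nontrivial C] [Nontrivial D] :
    IsEmpty (Coprod C D ≃* A × B) :=
  ⟨fun e => stmt_11_aux e⟩
end
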